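/- Conversely, if F is an n×n complex matrix all of whose eigenvalues have negative real part, then for every Hermitian positive definite Q there exists a Hermitian positive definite P with F†P + PF = -Q. -/

import Mathlib

open Matrix Polynomial
open scoped ComplexOrder

namespace LyapAux

variable {n : ℕ}

abbrev Mn (n : ℕ) := Matrix (Fin n) (Fin n) ℂ

lemma charmatrix_map_eval (M : Mn n) (μ : ℂ) :
    (charmatrix M).map (Polynomial.evalRingHom μ) = algebraMap ℂ (Mn n) μ - M := by
  ext i j
  rcases eq_or_ne i j with rfl | h
  · simp [charmatrix_apply_eq, Matrix.algebraMap_matrix_apply]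
  · simp [charmatrix_apply_ne _ _ _ h, Matrix.algebraMap_matrix_apply, h]

lemma eval_charpoly_zero_iff (M : Mn n) (μ : ℂ) :
    M.charpoly.eval μ = 0 ↔ μ ∈ spectrum ℂ M := by
  rw [spectrum.mem_iff, Matrix.isUnit_iff_isUnit_det, isUnit_iff_ne_zero, not_not]
  have : M.charpoly.eval μ = (algebraMap ℂ (Mn n) μ - M).det := by
    rw [← charmatrix_map_eval]
    rw [Matrix.charpoly]
    exact (RingHom.map_det (Polynomial.evalRingHom μ) (charmatrix M)).symm ▸ rfl
  rw [this]

lemma mem_spectrum_conjTranspose {A : Mn n} {μ : ℂ} (h : μ ∈ spectrum ℂ Aᴴ) :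
    star μ ∈ spectrum ℂ A := by
  rw [spectrum.mem_iff] at h ⊢
  intro hu
  apply h
  have he : (algebraMap ℂ (Mn n) (star μ) - A)ᴴ = algebraMap ℂ (Mn n) μ - Aᴴ := by
    rw [Algebra.algebraMap_eq_smul_one, Algebra.algebraMap_eq_smul_one]
    rw [conjTranspose_sub, conjTranspose_smul, conjTranspose_one, star_star]
  rw [← he]
  exact (Matrix.isUnit_conjTranspose _).mpr hu

lemma mem_spectrum_neg {A : Mn n} {μ : ℂ} (h : μ ∈ spectrum ℂ (-A)) :
    -μ ∈ spectrum ℂ A := by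
  rw [spectrum.mem_iff] at h ⊢
  intro hu
  apply h
  have he : algebraMap ℂ (Mn n) μ - (-A) = -(algebraMap ℂ (Mn n) (-μ) - A) := by
    simp [map_neg, sub_neg_eq_add, add_comm]
  rw [he]
  exact hu.neg

/-- If all eigenvalues of `A` have negative real part, then the Lyapunov operator
`X ↦ Aᴴ X + X A` has trivial kernel. -/
lemma lyap_ker {A X : Mn n} (hA : ∀ μ ∈ spectrum ℂ A, μ.re < 0)
    (hX : Aᴴ * X + X * A = 0) : X = 0 := by
  rcases Nat.eq_zero_or_pos n with hn | hn
  · subst hn; exact Subsingleton.elim _ _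
  have hcomm : Aᴴ * X = X * (-A) := by
    have h := eq_neg_of_add_eq_zero_left hX
    rw [h, ← mul_neg]
  have hpow : ∀ k : ℕ, (Aᴴ) ^ k * X = X * (-A) ^ k := by
    intro k
    induction k with
    | zero => simp
    | succ k ih =>
        rw [pow_succ, pow_succ, mul_assoc, hcomm, ← mul_assoc, ih, mul_assoc]
  have haeval : ∀ p : ℂ[X], (aeval Aᴴ p) * X = X * (aeval (-A) p) := by
    intro p
    induction p using Polynomial.induction_on' with
    | add p q hp hq => rw [map_add, map_add, add_mul, mul_add, hp, hq]
    | monomial k c =>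
        rw [aeval_monomial, aeval_monomial]
        rw [mul_assoc, hpow k, ← mul_assoc, ← mul_assoc]
        congr 1
        rw [Algebra.commutes]
  have hzero : (aeval Aᴴ ((-A).charpoly)) * X = 0 := by
    rw [haeval, Matrix.aeval_self_charpoly, mul_zero]
  have hdeg : 0 < ((-A).charpoly).degree := by
    rw [Matrix.charpoly_degree_eq_dim, Fintype.card_fin]
    exact_mod_cast hn
  have hunit : IsUnit (aeval Aᴴ ((-A).charpoly)) := by
    rw [← spectrum.zero_notMem_iff ℂ]
    rw [spectrum.map_polynomial_aeval_of_degree_pos Aᴴ _ hdeg]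
    rintro ⟨μ, hμ, hev⟩
    have h1 : μ ∈ spectrum ℂ (-A) := (eval_charpoly_zero_iff (-A) μ).mp hev
    have h2 : (-μ).re < 0 := hA _ (mem_spectrum_neg h1)
    have h3 : (star μ).re < 0 := hA _ (mem_spectrum_conjTranspose hμ)
    simp only [Complex.neg_re, neg_neg, Left.neg_neg_iff] at h2
    rw [Complex.star_def, Complex.conj_re] at h3
    linarith
  calc X = ↑hunit.unit⁻¹ * (aeval Aᴴ ((-A).charpoly) * X) := by
        rw [← mul_assoc, IsUnit.val_inv_mul, one_mul]
      _ = 0 := by rw [hzero, mul_zero]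

/-! ### Quadratic form helpers -/

noncomputable def phi (M : Mn n) (x : Fin n → ℂ) : ℝ := (star x ⬝ᵥ M *ᵥ x).re

lemma dot_eq_sum (M : Mn n) (x : Fin n → ℂ) :
    star x ⬝ᵥ M *ᵥ x = ∑ i, ∑ j, star (x i) * M i j * x j := by
  simp [dotProduct, mulVec, Finset.mul_sum, mul_assoc]

lemma continuous_phi_M (x : Fin n → ℂ) : Continuous fun M : Mn n => phi M x := by
  unfold phi
  simp_rw [dot_eq_sum]
  refine Complex.continuous_re.comp ?_
  refine continuous_finset_sum _ fun i _ => continuous_finset_sum _ fun j _ => ?_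
  exact (continuous_const.mul (continuous_apply_apply i j)).mul continuous_const

lemma continuous_phi_x (M : Mn n) : Continuous fun x : Fin n → ℂ => phi M x := by
  unfold phi
  simp_rw [dot_eq_sum]
  refine Complex.continuous_re.comp ?_
  refine continuous_finset_sum _ fun i _ => continuous_finset_sum _ fun j _ => ?_
  exact ((continuous_star.comp (continuous_apply i)).mul continuous_const).mul
    (continuous_apply j)

lemma star_form {M : Mn n} (hM : M.IsHermitian) (x : Fin n → ℂ) :
    star (star x ⬝ᵥ M *ᵥ x) = star x ⬝ᵥ M *ᵥ x := by
  nth_rewrite 2 [← hM]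
  calc star (star x ⬝ᵥ M *ᵥ x) = star (M *ᵥ x) ⬝ᵥ x := by
        rw [star_dotProduct, star_star]
    _ = (star x ᵥ* Mᴴ) ⬝ᵥ x := by rw [star_mulVec]
    _ = star x ⬝ᵥ Mᴴ *ᵥ x := by rw [← dotProduct_mulVec]

lemma form_im_zero {M : Mn n} (hM : M.IsHermitian) (x : Fin n → ℂ) :
    (star x ⬝ᵥ M *ᵥ x).im = 0 :=
  Complex.conj_eq_iff_im.mp (star_form hM x)

lemma form_nonneg_of_phi {M : Mn n} (hM : M.IsHermitian) {x : Fin n → ℂ}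
    (h : 0 ≤ phi M x) : 0 ≤ star x ⬝ᵥ M *ᵥ x := by
  rw [Complex.nonneg_iff]
  exact ⟨h, (form_im_zero hM x).symm⟩

lemma phi_smul (M : Mn n) (c : ℂ) (x : Fin n → ℂ) :
    phi M (c • x) = Complex.normSq c * phi M x := by
  unfold phi
  have h : star (c • x) ⬝ᵥ M *ᵥ (c • x) = (Complex.normSq c : ℂ) * (star x ⬝ᵥ M *ᵥ x) := by
    rw [star_smul, mulVec_smul, smul_dotProduct, dotProduct_smul, smul_eq_mul, smul_eq_mul,
      ← mul_assoc, Complex.normSq_eq_conj_mul_self, Complex.star_def]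
  rw [h, Complex.re_ofReal_mul]

lemma phi_sub (M M' : Mn n) (x : Fin n → ℂ) :
    phi M x - phi M' x = phi (M - M') x := by
  unfold phi
  rw [← Complex.sub_re]
  congr 1
  rw [sub_mulVec, dotProduct_sub]

lemma abs_phi_le (Δ : Mn n) {x : Fin n → ℂ} (hx : ‖x‖ = 1) :
    |phi Δ x| ≤ ∑ i, ∑ j, ‖Δ i j‖ := by
  have hxi : ∀ i, ‖x i‖ ≤ 1 := by
    intro i
    have h := norm_le_pi_norm x i
    rw [hx] at h
    exact h
  calc |phi Δ x| ≤ ‖star x ⬝ᵥ Δ *ᵥ x‖ := Complex.abs_re_le_norm _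
    _ = ‖∑ i, ∑ j, star (x i) * Δ i j * x j‖ := by rw [dot_eq_sum]
    _ ≤ ∑ i, ‖∑ j, star (x i) * Δ i j * x j‖ := norm_sum_le _ _
    _ ≤ ∑ i, ∑ j, ‖Δ i j‖ := by
        refine Finset.sum_le_sum fun i _ => ?_
        refine (norm_sum_le _ _).trans (Finset.sum_le_sum fun j _ => ?_)
        rw [norm_mul, norm_mul]
        have h1 := hxi i
        have h2 := hxi j
        have h3 : ‖star (x i)‖ = ‖x i‖ := by
          rw [norm_star]
        rw [h3]
        have t1 : ‖x i‖ * ‖Δ i j‖ ≤ ‖Δ i j‖ :=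
          mul_le_of_le_one_left (norm_nonneg _) h1
        have t2 := mul_le_mul t1 h2 (norm_nonneg _) (norm_nonneg _)
        simpa using t2

end LyapAux

open LyapAux in
/-- Lyapunov equation solvability: if every eigenvalue of `F`
has negative real part, then for every Hermitian positive definite `Q` there
exists a Hermitian positive definite `P` with `FᴴP + PF = -Q`. -/
theorem lyapunov_solvable {n : ℕ}
    (F : Matrix (Fin n) (Fin n) ℂ)
    (hF : ∀ μ ∈ spectrum ℂ F, μ.re < 0) :
    ∀ Q : Matrix (Fin n) (Fin n) ℂ, Q.PosDef →
      ∃ P : Matrix (Fin n) (Fin n) ℂ, P.PosDef ∧ Fᴴ * P + P * F = -Q := by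
  classical
  intro Q hQ
  rcases Nat.eq_zero_or_pos n with hn | hn
  · subst hn
    exact ⟨1, ⟨Subsingleton.elim _ _, fun x hx => absurd (Subsingleton.elim x 0) hx⟩,
      Subsingleton.elim _ _⟩
  haveI : Nonempty (Fin n) := Fin.pos_iff_nonempty.mp hn
  -- the homotopy path of Hurwitz matrices from `-1` to `F`
  set A : ℝ → Mn n := fun s => (s : ℂ) • F - (1 - (s : ℂ)) • 1 with hA
  have hHur : ∀ s ∈ Set.Icc (0:ℝ) 1, ∀ μ ∈ spectrum ℂ (A s), μ.re < 0 := by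
    rintro s ⟨hs0, hs1⟩ μ hμ
    rcases eq_or_lt_of_le hs0 with hs | hs
    · -- s = 0
      have hA0 : A s = algebraMap ℂ (Mn n) (-1) := by
        simp [hA, ← hs, Algebra.algebraMap_eq_smul_one]
      rw [hA0] at hμ
      have hm : μ = -1 := by
        by_contra hne
        apply spectrum.mem_iff.mp hμ
        have he : algebraMap ℂ (Mn n) μ - algebraMap ℂ (Mn n) (-1)
            = algebraMap ℂ (Mn n) (μ + 1) := by
          rw [← map_sub, sub_neg_eq_add]
        rw [he]
        refine (isUnit_iff_ne_zero.mpr ?_).map (algebraMap ℂ (Mn n))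
        intro h0
        exact hne (by linear_combination h0)
      rw [hm]
      norm_num
    · set ν : ℂ := (μ + (1 - (s:ℂ))) / (s:ℂ) with hν
      have hsne : (s:ℂ) ≠ 0 := by exact_mod_cast ne_of_gt hs
      have hmem : ν ∈ spectrum ℂ F := by
        rw [spectrum.mem_iff] at hμ ⊢
        intro hu
        apply hμ
        have hsmul : (s:ℂ) • (ν • (1 : Mn n)) = (μ + (1 - (s:ℂ))) • (1 : Mn n) := by
          rw [smul_smul, mul_div_cancel₀ _ hsne]
        have key : algebraMap ℂ (Mn n) μ - A s
            = ((s:ℂ) • (1 : Mn n)) * (algebraMap ℂ (Mn n) ν - F) := by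
          rw [smul_mul_assoc, one_mul, Algebra.algebraMap_eq_smul_one,
            Algebra.algebraMap_eq_smul_one, smul_sub, hsmul, hA]
          module
        rw [key]
        refine IsUnit.mul ?_ hu
        rw [← Algebra.algebraMap_eq_smul_one]
        exact (isUnit_iff_ne_zero.mpr hsne).map (algebraMap ℂ (Mn n))
      have hre := hF ν hmem
      have hμν : μ = (s:ℂ) * ν - (1 - (s:ℂ)) := by
        rw [hν, mul_div_cancel₀ _ hsne]; ring
      have hμre : μ.re = s * ν.re - (1 - s) := by
        rw [hμν]
        simp [Complex.sub_re, Complex.re_ofReal_mul]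
      rw [hμre]
      nlinarith
  -- the Lyapunov operator
  let L : Mn n → (Mn n →ₗ[ℂ] Mn n) := fun B =>
    { toFun := fun X => Bᴴ * X + X * B
      map_add' := fun X Y => by simp only [mul_add, add_mul]; abel
      map_smul' := fun c X => by
        simp only [RingHom.id_apply, mul_smul_comm, smul_mul_assoc, smul_add] }
  have hLdef : ∀ B X, L B X = Bᴴ * X + X * B := fun B X => rfl
  have hLinj : ∀ s ∈ Set.Icc (0:ℝ) 1, Function.Injective (L (A s)) := by
    intro s hs X Y hXY
    have h0 : L (A s) (X - Y) = 0 := by rw [map_sub, hXY, sub_self]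
    rw [hLdef] at h0
    exact sub_eq_zero.mp (lyap_ker (hHur s hs) h0)
  -- matrix representation over a basis
  let b := Module.finBasis ℂ (Mn n)
  let Mm : ℝ → Matrix (Fin (Module.finrank ℂ (Mn n))) (Fin (Module.finrank ℂ (Mn n))) ℂ :=
    fun s => LinearMap.toMatrix b b (L (A s))
  have hAcont : Continuous A := by
    refine Continuous.sub ?_ ?_
    · exact Complex.continuous_ofReal.smul continuous_const
    · exact (continuous_const.sub Complex.continuous_ofReal).smul continuous_const
  have hreprCont : Continuous fun v : Mn n => b.equivFun v :=
    b.equivFun.toLinearMap.continuous_of_finiteDimensional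
  have hMmcont : Continuous Mm := by
    apply continuous_matrix
    intro i j
    have hentry : (fun s => Mm s i j) = fun s => b.equivFun ((A s)ᴴ * b j + b j * A s) i := by
      funext s
      simp only [Mm, LinearMap.toMatrix_apply, Module.Basis.equivFun_apply]
      rfl
    rw [hentry]
    exact (continuous_apply i).comp (hreprCont.comp
      ((hAcont.matrix_conjTranspose.matrix_mul continuous_const).add
        (continuous_const.matrix_mul hAcont)))
  have hUnit : ∀ s ∈ Set.Icc (0:ℝ) 1, IsUnit (Mm s) := by
    intro s hs
    have hbij : Function.Bijective (L (A s)) :=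
      ⟨hLinj s hs, LinearMap.injective_iff_surjective.mp (hLinj s hs)⟩
    let e := LinearEquiv.ofBijective (L (A s)) hbij
    have hcomp : (L (A s)).comp (e.symm : Mn n →ₗ[ℂ] Mn n) = LinearMap.id :=
      LinearMap.ext fun X => e.apply_symm_apply X
    have h1 : Mm s * LinearMap.toMatrix b b (e.symm : Mn n →ₗ[ℂ] Mn n) = 1 := by
      rw [show Mm s = LinearMap.toMatrix b b (L (A s)) from rfl,
        ← LinearMap.toMatrix_comp b b b, hcomp, LinearMap.toMatrix_id]
    exact (Matrix.isUnit_iff_isUnit_det _).mpr (Matrix.isUnit_det_of_right_inverse h1)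
  -- the solution path
  let qv := b.equivFun (-Q)
  let f : ℝ → Mn n := fun s => b.equivFun.symm (((Mm s).det)⁻¹ • ((Mm s).adjugate *ᵥ qv))
  have hdetne : ∀ s ∈ Set.Icc (0:ℝ) 1, (Mm s).det ≠ 0 := by
    intro s hs
    exact ((Matrix.isUnit_iff_isUnit_det _).mp (hUnit s hs)).ne_zero
  have hfcont : ∀ s ∈ Set.Icc (0:ℝ) 1, ContinuousAt f s := by
    intro s hs
    have hdet : ContinuousAt (fun s => (Mm s).det) s := hMmcont.matrix_det.continuousAt
    have h1 : ContinuousAt (fun s => ((Mm s).det)⁻¹ • ((Mm s).adjugate *ᵥ qv)) s :=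
      (hdet.inv₀ (hdetne s hs)).smul
        (hMmcont.matrix_adjugate.matrix_mulVec continuous_const).continuousAt
    exact (b.equivFun.symm.toLinearMap.continuous_of_finiteDimensional.continuousAt).comp h1
  have hrepr : ∀ x : Mn n, (fun i => (b.repr x) i) = b.equivFun x := by
    intro x
    funext i
    rw [Module.Basis.equivFun_apply]
  have heq : ∀ s ∈ Set.Icc (0:ℝ) 1, L (A s) (f s) = -Q := by
    intro s hs
    apply b.equivFun.injective
    have h1 : b.equivFun (L (A s) (f s)) = Mm s *ᵥ b.equivFun (f s) := by
      rw [← hrepr, ← hrepr]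
      exact (LinearMap.toMatrix_mulVec_repr b b (L (A s)) (f s)).symm
    have h2 : b.equivFun (f s) = ((Mm s).det)⁻¹ • ((Mm s).adjugate *ᵥ qv) :=
      b.equivFun.apply_symm_apply _
    rw [h1, h2, mulVec_smul, mulVec_mulVec, Matrix.mul_adjugate, Matrix.smul_mulVec,
      one_mulVec, smul_smul, inv_mul_cancel₀ (hdetne s hs), one_smul]
  have hUniq : ∀ s ∈ Set.Icc (0:ℝ) 1, ∀ X, L (A s) X = -Q → X = f s :=
    fun s hs X hX => hLinj s hs (hX.trans (heq s hs).symm)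
  have hHerm : ∀ s ∈ Set.Icc (0:ℝ) 1, (f s).IsHermitian := by
    intro s hs
    have h2 := congrArg conjTranspose (heq s hs)
    rw [hLdef, conjTranspose_add, conjTranspose_mul, conjTranspose_mul,
      conjTranspose_conjTranspose, conjTranspose_neg, hQ.1.eq, add_comm] at h2
    exact hUniq s hs _ (by rw [hLdef]; exact h2)
  have hker : ∀ s ∈ Set.Icc (0:ℝ) 1, ∀ x, (f s) *ᵥ x = 0 → x = 0 := by
    intro s hs x hx
    by_contra hxne
    have h := congrArg (fun M => star x ⬝ᵥ M *ᵥ x) (heq s hs)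
    simp only [hLdef] at h
    rw [add_mulVec, dotProduct_add] at h
    have e1 : star x ⬝ᵥ ((A s)ᴴ * f s) *ᵥ x = 0 := by
      rw [← mulVec_mulVec, hx, mulVec_zero, dotProduct_zero]
    have e2 : star x ⬝ᵥ (f s * A s) *ᵥ x = 0 := by
      rw [← mulVec_mulVec, dotProduct_mulVec]
      have : star x ᵥ* f s = 0 := by
        rw [← (hHerm s hs).eq, ← star_mulVec, hx, star_zero]
      rw [this, zero_dotProduct]
    rw [e1, e2, neg_mulVec, dotProduct_neg] at h
    have hQ0 : star x ⬝ᵥ Q *ᵥ x = 0 := by linear_combination h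
    have := hQ.dotProduct_mulVec_pos hxne
    rw [hQ0] at this
    exact lt_irrefl 0 this
  -- connectedness argument on [0,1]
  haveI : PreconnectedSpace (Set.Icc (0:ℝ) 1) := Subtype.preconnectedSpace isPreconnected_Icc
  let g : Set.Icc (0:ℝ) 1 → Mn n := fun s => f s
  have hgcont : Continuous g :=
    ContinuousOn.restrict (fun s hs => (hfcont s hs).continuousWithinAt)
  let S : Set (Set.Icc (0:ℝ) 1) := {s | ∀ x, 0 ≤ phi (g s) x}
  have hSclosed : IsClosed S := by
    have hSeq : S = ⋂ x : Fin n → ℂ, (fun s => phi (g s) x) ⁻¹' Set.Ici 0 := by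
      ext s
      simp [S, Set.mem_iInter]
    rw [hSeq]
    exact isClosed_iInter fun x =>
      IsClosed.preimage ((continuous_phi_M x).comp hgcont) isClosed_Ici
  have hSopen : IsOpen S := by
    rw [isOpen_iff_mem_nhds]
    intro s0 hs0
    have hpos : ∀ x, x ≠ 0 → 0 < phi (g s0) x := by
      intro x hx
      rcases eq_or_lt_of_le (hs0 x) with he | h
      · exfalso
        have hP : (g s0).PosSemidef :=
          PosSemidef.of_dotProduct_mulVec_nonneg (hHerm _ s0.2) fun y => form_nonneg_of_phi (hHerm _ s0.2) (hs0 y)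
        have hform0 : star x ⬝ᵥ (g s0) *ᵥ x = 0 := by
          apply Complex.ext
          · simpa [phi] using he.symm
          · simpa using form_im_zero (hHerm _ s0.2) x
        exact hx (hker _ s0.2 x ((hP.dotProduct_mulVec_zero_iff x).mp hform0))
      · exact h
    obtain ⟨x0, hx0K, hx0min⟩ := (isCompact_sphere (0 : Fin n → ℂ) 1).exists_isMinOn
      (NormedSpace.sphere_nonempty.mpr zero_le_one) (continuous_phi_x (g s0)).continuousOn
    set c := phi (g s0) x0 with hc
    have hx0n : ‖x0‖ = 1 := mem_sphere_zero_iff_norm.mp hx0K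
    have hcpos : 0 < c := by
      apply hpos
      intro h0
      rw [h0] at hx0n
      simp at hx0n
    let D : Set.Icc (0:ℝ) 1 → ℝ := fun s => ∑ i, ∑ j, ‖(g s - g s0) i j‖
    have hDcont : Continuous D := by
      refine continuous_finset_sum _ fun i _ => continuous_finset_sum _ fun j _ => ?_
      exact continuous_norm.comp
        ((continuous_apply_apply i j).comp (hgcont.sub continuous_const))
    have hD0 : D s0 = 0 := by simp [D]
    have hV : {s | D s < c} ∈ nhds s0 :=
      (isOpen_lt hDcont continuous_const).mem_nhds (by simp [hD0, hcpos])
    refine Filter.mem_of_superset hV ?_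
    intro s hs x
    rcases eq_or_ne x 0 with rfl | hx
    · simp [phi]
    · have hnx : ‖x‖ ≠ 0 := norm_ne_zero_iff.mpr hx
      set u : Fin n → ℂ := ((‖x‖ : ℂ))⁻¹ • x with hudef
      have hu : ‖u‖ = 1 := by
        rw [hudef, norm_smul, norm_inv, Complex.norm_real, Real.norm_eq_abs,
          abs_of_nonneg (norm_nonneg x), inv_mul_cancel₀ hnx]
      have hxu : x = ((‖x‖ : ℂ)) • u := by
        rw [hudef, smul_smul, mul_inv_cancel₀ (by exact_mod_cast hnx), one_smul]
      have hphix : phi (g s) x = Complex.normSq ((‖x‖ : ℂ)) * phi (g s) u := by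
        conv_lhs => rw [hxu]
        exact phi_smul _ _ _
      rw [hphix]
      have h1 : c ≤ phi (g s0) u := hx0min (mem_sphere_zero_iff_norm.mpr hu)
      have h2 : |phi (g s) u - phi (g s0) u| ≤ D s := by
        rw [phi_sub]
        exact abs_phi_le _ hu
      have hDs : D s < c := hs
      have habs := (abs_le.mp h2).1
      have hposu : 0 < phi (g s) u := by linarith
      exact mul_nonneg (Complex.normSq_nonneg _) hposu.le
  have hmem0 : (0:ℝ) ∈ Set.Icc (0:ℝ) 1 := by norm_num
  have hmem1 : (1:ℝ) ∈ Set.Icc (0:ℝ) 1 := by norm_num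
  have hS0 : (⟨0, hmem0⟩ : Set.Icc (0:ℝ) 1) ∈ S := by
    have hA0 : A 0 = -1 := by
      simp [hA]
    have hf0 : ((2:ℂ)⁻¹ • Q) = f 0 := by
      apply hUniq 0 hmem0
      rw [hLdef, hA0]
      rw [conjTranspose_neg, conjTranspose_one, neg_one_mul, mul_neg_one, ← neg_add,
        ← add_smul]
      norm_num
    intro x
    have hgf : g ⟨0, hmem0⟩ = f 0 := rfl
    rw [hgf, ← hf0]
    rcases eq_or_ne x 0 with rfl | hx
    · simp [phi]
    · have hQx := hQ.dotProduct_mulVec_pos hx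
      rw [Complex.pos_iff] at hQx
      have : phi ((2:ℂ)⁻¹ • Q) x = 2⁻¹ * (star x ⬝ᵥ Q *ᵥ x).re := by
        unfold phi
        rw [Matrix.smul_mulVec, dotProduct_smul, smul_eq_mul, Complex.mul_re]
        norm_num
      rw [this]
      nlinarith [hQx.1]
  have hSuniv : S = Set.univ := IsClopen.eq_univ ⟨hSclosed, hSopen⟩ ⟨_, hS0⟩
  have h1S : (⟨1, hmem1⟩ : Set.Icc (0:ℝ) 1) ∈ S := hSuniv ▸ Set.mem_univ _
  have hPsemi : (f 1).PosSemidef :=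
    PosSemidef.of_dotProduct_mulVec_nonneg (hHerm 1 hmem1) fun x => form_nonneg_of_phi (hHerm 1 hmem1) (h1S x)
  have hPdef : (f 1).PosDef := by
    refine PosDef.of_dotProduct_mulVec_pos hPsemi.1 fun x hx => ?_
    refine lt_of_le_of_ne (hPsemi.dotProduct_mulVec_nonneg x) ?_
    intro he
    exact hx (hker 1 hmem1 x ((hPsemi.dotProduct_mulVec_zero_iff x).mp he.symm))
  refine ⟨f 1, hPdef, ?_⟩
  have hA1 : A 1 = F := by simp [hA]
  have h := heq 1 hmem1
  rw [hLdef, hA1] at h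
  exact h
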